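/- Let A : ℝ → ℝ with kernel K(x,y) = (A(y)−A(x))/(y−x)² for x ≠ y. Then for distinct reals x, y, z, the symmetrization S(x,y,z) = K(x,y)K(x,z) + K(y,x)K(y,z) + K(z,y)K(z,x) equals (((A(y)−A(x))/(y−x) − (A(z)−A(x))/(z−x))/(z−y))². In particular S(x,y,z) ≥ 0. -/
import Mathlib

/-- Kernel of Calderón's first commutator: `K(x,y) = (A(y)−A(x))/(y−x)²`. -/
noncomputable def commKernel (A : ℝ → ℝ) (x y : ℝ) : ℝ := (A y - A x) / (y - x) ^ 2

/-- The symmetrization `S(x,y,z) = K(x,y)K(x,z)+K(y,x)K(y,z)+K(z,y)K(z,x)` of the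
first-commutator kernel equals the square of a divided difference; in particular it
is nonnegative. -/
theorem symmetrization_first_commutator (A : ℝ → ℝ) (x y z : ℝ)
    (hxy : x ≠ y) (hxz : x ≠ z) (hyz : y ≠ z) :
    commKernel A x y * commKernel A x z + commKernel A y x * commKernel A y z +
      commKernel A z y * commKernel A z x =
      (((A y - A x) / (y - x) - (A z - A x) / (z - x)) / (z - y)) ^ 2 ∧
    0 ≤ commKernel A x y * commKernel A x z + commKernel A y x * commKernel A y z +
      commKernel A z y * commKernel A z x := by
  have h1 : y - x ≠ 0 := sub_ne_zero.mpr (Ne.symm hxy)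
  have h2 : z - x ≠ 0 := sub_ne_zero.mpr (Ne.symm hxz)
  have h3 : z - y ≠ 0 := sub_ne_zero.mpr (Ne.symm hyz)
  have h4 : x - y ≠ 0 := sub_ne_zero.mpr hxy
  have h5 : x - z ≠ 0 := sub_ne_zero.mpr hxz
  have h6 : y - z ≠ 0 := sub_ne_zero.mpr hyz
  have key : commKernel A x y * commKernel A x z + commKernel A y x * commKernel A y z +
      commKernel A z y * commKernel A z x =
      (((A y - A x) / (y - x) - (A z - A x) / (z - x)) / (z - y)) ^ 2 := by
    unfold commKernel
    field_simp
    ring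
  exact ⟨key, key ▸ sq_nonneg _⟩
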